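/- arXiv:2307.07660 — 2 statements merged into one kernel-verified Lean document; each statement's English description precedes it below -/
import Mathlib

section
/- For all positive integers n, the n-th harmonic number satisfies H_n < ln n + γ + 1/(2n), where γ is the Euler–Mascheroni constant (Franel's inequality). -/
open Real Filter Topology

/-- Key analytic inequality: `log (1+t) < t(t+2)/(2(t+1))` for `t > 0`. -/
lemma log_lt_trapezoid {t : ℝ} (ht : 0 < t) :
    Real.log (1 + t) < t * (t + 2) / (2 * (t + 1)) := by
  set g : ℝ → ℝ := fun x => x / 2 + 1 / 2 - (x + 1)⁻¹ / 2 - Real.log (1 + x) with hg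
  have key : StrictMonoOn g (Set.Ici 0) := by
    have hc : ContinuousOn g (Set.Ici 0) := by
      apply ContinuousOn.sub
      · apply ContinuousOn.sub
        · fun_prop
        · apply ContinuousOn.div_const
          apply ContinuousOn.inv₀ (by fun_prop)
          intro x hx; simp at hx; positivity
      · apply ContinuousOn.log (by fun_prop)
        intro x hx; simp at hx; positivity
    apply strictMonoOn_of_deriv_pos (convex_Ici 0) hc
    intro x hx
    rw [interior_Ici] at hx
    have hx : 0 < x := hx
    have h1 : HasDerivAt (fun y : ℝ => (y + 1)⁻¹) (-1/(x+1)^2) x := by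
      have := ((hasDerivAt_id x).add_const 1).inv (by positivity)
      simp at this; exact this
    have h2 : HasDerivAt (fun y : ℝ => Real.log (1 + y)) ((1+x)⁻¹) x := by
      have := (Real.hasDerivAt_log (x := 1 + x) (by positivity)).comp x
        ((hasDerivAt_id x).const_add 1)
      simp at this; exact this
    have hD : HasDerivAt g (1/2 - (-1/(x+1)^2) / 2 - (1+x)⁻¹) x := by
      have := (((hasDerivAt_id x).div_const 2).add_const (1/2)).sub (h1.div_const 2)
      exact this.sub h2
    rw [hD.deriv]
    rw [show (1:ℝ)/2 - (-1/(x+1)^2) / 2 - (1+x)⁻¹ = x^2 / (2*(x+1)^2) by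
      field_simp; ring]
    positivity
  have h0 : g 0 = 0 := by simp [hg]
  have := key (Set.self_mem_Ici) (Set.mem_Ici.mpr ht.le) ht
  rw [h0] at this
  simp only [hg] at this
  have heq : t * (t + 2) / (2 * (t + 1)) = t / 2 + 1 / 2 - (t + 1)⁻¹ / 2 := by
    have : (t:ℝ) + 1 ≠ 0 := by positivity
    field_simp
    ring
  rw [heq]
  linarith [this]

lemma franel_step (n : ℕ) (hn : 1 ≤ n) :
    (harmonic n : ℝ) - Real.log n - 1 / (2 * n) <
    (harmonic (n+1) : ℝ) - Real.log (n+1) - 1 / (2 * (n+1)) := by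
  have hn0 : (0:ℝ) < n := by exact_mod_cast hn
  have hkey := log_lt_trapezoid (t := 1 / n) (by positivity)
  have hlog : Real.log ((n:ℝ)+1) - Real.log n = Real.log (1 + 1/n) := by
    rw [← Real.log_div (by positivity) hn0.ne']
    congr 1
    field_simp
  have hh : (harmonic (n+1) : ℝ) = harmonic n + 1 / (n+1) := by
    rw [harmonic_succ]; push_cast; ring
  have heq : (1:ℝ)/n * (1/n + 2) / (2 * (1/n + 1)) =
      1 / (n+1) + 1 / (2*n) - 1 / (2*(n+1)) := by
    have h1 : (n:ℝ) + 1 ≠ 0 := by positivity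
    field_simp
    ring
  rw [heq] at hkey
  push_cast
  rw [hh]
  push_cast at hlog ⊢
  linarith [hlog, hkey]

/-- Franel's inequality: for all positive integers `n`,
`H_n < ln n + γ + 1/(2n)`. -/
theorem franel_inequality (n : ℕ) (hn : 1 ≤ n) :
    (harmonic n : ℝ) <
      Real.log n + Real.eulerMascheroniConstant + 1 / (2 * n) := by
  set F : ℕ → ℝ := fun m => (harmonic m : ℝ) - Real.log m - 1 / (2 * m) with hF
  have hmono : ∀ m k, 1 ≤ m → m ≤ k → F m ≤ F k := by
    intro m k hm hmk
    induction k with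
    | zero => omega
    | succ k ih =>
      rcases Nat.lt_or_ge m (k+1) with h | h
      · have hk : 1 ≤ k := by omega
        refine (ih (by omega)).trans ?_
        have := (franel_step k hk).le
        simp only [hF]
        push_cast
        convert this using 2
      · have : m = k + 1 := by omega
        subst this; rfl
  have hlim : Tendsto F atTop (𝓝 Real.eulerMascheroniConstant) := by
    have h1 := Real.tendsto_harmonic_sub_log
    have h2 : Tendsto (fun m : ℕ => 1 / (2 * (m:ℝ))) atTop (𝓝 0) := by
      have := tendsto_one_div_atTop_nhds_zero_nat (𝕜 := ℝ)
      have h3 : Tendsto (fun m : ℕ => (1:ℝ) / m * (1/2)) atTop (𝓝 (0 * (1/2))) :=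
        this.mul_const _
      simp only [zero_mul] at h3
      apply h3.congr
      intro m
      rw [div_mul_div_comm, one_mul, mul_comm]
    have h3 := h1.sub h2
    rw [sub_zero] at h3
    exact h3
  have hle : F (n+1) ≤ Real.eulerMascheroniConstant := by
    apply ge_of_tendsto hlim
    filter_upwards [eventually_ge_atTop (n+1)] with m hm
    exact hmono (n+1) m (by omega) hm
  have h2 : F n ≤ F (n+1) := by
    have := (franel_step n hn).le
    simp only [hF]; push_cast; convert this using 2
  have h3 : F n < Real.eulerMascheroniConstant := by
    have hs : F n < F (n+1) := by
      have := franel_step n hn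
      simp only [hF]; push_cast; convert this using 2
    exact hs.trans_le hle
  simp only [hF] at h3
  linarith
end

section
/- Consider n items x_1 < ... < x_n with independent uniformly random distinct priorities, and let the depth D_j of x_j be 1 plus the number of indices i ≠ j such that x_i has the maximum priority among the consecutive range between x_i and x_j. Then E[D_j] = H_j + H_{n−j+1} − 1, where H_m is the m-th harmonic number. -/
open MeasureTheory ProbabilityTheory
open scoped Classical

lemma joint_law {Ω : Type*} [MeasureSpace Ω] [IsProbabilityMeasure (ℙ : Measure Ω)]
    (P : ℕ → Ω → ℝ) (hmeas : ∀ i, Measurable (P i))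
    (hindep : iIndepFun P ℙ)
    (hident : ∀ i j, Measure.map (P i) ℙ = Measure.map (P j) ℙ)
    (S : Finset ℕ) :
    Measure.map (fun ω (s : S) => P s ω) ℙ
      = Measure.pi (fun _ : S => Measure.map (P 0) ℙ) := by
  haveI : IsProbabilityMeasure (Measure.map (P 0) ℙ) :=
    Measure.isProbabilityMeasure_map (hmeas 0).aemeasurable
  have hgmeas : Measurable (fun ω (s : S) => P s ω) :=
    measurable_pi_lambda _ (fun s => hmeas s)
  refine (Measure.pi_eq (μ := fun _ : S => Measure.map (P 0) ℙ) fun t ht => ?_).symm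
  rw [Measure.map_apply hgmeas (MeasurableSet.univ_pi ht)]
  set T : ℕ → Set ℝ := fun i => if h : i ∈ S then t ⟨i, h⟩ else Set.univ with hT
  have hTmeas : ∀ i, i ∈ S → MeasurableSet (T i) := by
    intro i hi; simp only [hT, dif_pos hi]; exact ht _
  have hpre : (fun ω (s : S) => P s ω) ⁻¹' (Set.pi Set.univ t)
      = ⋂ i ∈ S, P i ⁻¹' T i := by
    ext ω
    simp only [Set.mem_preimage, Set.mem_pi, Set.mem_univ, forall_true_left,
      Set.mem_iInter, hT]
    constructor
    · intro h i hi; simp only [dif_pos hi]; exact h ⟨i, hi⟩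
    · intro h s; have := h s.1 s.2; simpa [dif_pos s.2] using this
  rw [hpre, hindep.measure_inter_preimage_eq_mul S hTmeas]
  rw [← Finset.prod_attach S (fun i => ℙ (P i ⁻¹' T i))]
  refine Finset.prod_congr rfl fun s _ => ?_
  have : ℙ (P s.1 ⁻¹' T s.1) = (Measure.map (P 0) ℙ) (T s.1) := by
    rw [← hident s.1 0, Measure.map_apply (hmeas s.1) (hTmeas s.1 s.2)]
  rw [this, hT]; simp [dif_pos s.2]

lemma pi_perm_inv {ι : Type*} [Fintype ι] (μ : Measure ℝ) [IsProbabilityMeasure μ] (e : ι ≃ ι) :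
    Measure.map (fun f : ι → ℝ => f ∘ e) (Measure.pi fun _ : ι => μ)
      = Measure.pi fun _ : ι => μ := by
  have hm : Measurable (fun f : ι → ℝ => f ∘ e) :=
    measurable_pi_lambda _ (fun j => measurable_pi_apply (e j))
  refine (Measure.pi_eq (μ := fun _ : ι => μ) fun t ht => ?_).symm
  rw [Measure.map_apply hm (MeasurableSet.univ_pi ht)]
  have hpre : (fun f : ι → ℝ => f ∘ e) ⁻¹' (Set.pi Set.univ t)
      = Set.pi Set.univ (fun k => t (e.symm k)) := by
    ext f
    simp only [Set.mem_preimage, Set.mem_pi, Set.mem_univ, forall_true_left, Function.comp]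
    exact ⟨fun h k => by simpa using h (e.symm k), fun h j => by simpa using h (e j)⟩
  rw [hpre, Measure.pi_pi]
  exact Equiv.prod_comp e.symm (fun j => μ (t j))

lemma strict_max_prob {Ω : Type*} [MeasureSpace Ω] [IsProbabilityMeasure (ℙ : Measure Ω)]
    (P : ℕ → Ω → ℝ) (hmeas : ∀ i, Measurable (P i))
    (hindep : iIndepFun P ℙ)
    (hident : ∀ i j, Measure.map (P i) ℙ = Measure.map (P j) ℙ)
    (hdistinct : ∀ i j, i ≠ j → ℙ {ω | P i ω = P j ω} = 0)
    (S : Finset ℕ) (i : ℕ) (hi : i ∈ S) :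
    ℙ {ω | ∀ k ∈ S, k ≠ i → P k ω < P i ω} = (S.card : ENNReal)⁻¹ := by
  haveI : IsProbabilityMeasure (Measure.map (P 0) ℙ) :=
    Measure.isProbabilityMeasure_map (hmeas 0).aemeasurable
  set μ := Measure.map (P 0) ℙ with hμ
  set A : ℕ → Set Ω := fun a => {ω | ∀ k ∈ S, k ≠ a → P k ω < P a ω} with hA
  have hAmeas : ∀ a, MeasurableSet (A a) := by
    intro a
    have : A a = ⋂ k ∈ S, ⋂ (_ : k ≠ a), {ω | P k ω < P a ω} := by
      ext ω; simp [hA]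
    rw [this]
    exact MeasurableSet.biInter (Finset.countable_toSet S)
      (fun k _ => MeasurableSet.iInter fun _ => measurableSet_lt (hmeas k) (hmeas a))
  set g : Ω → (S → ℝ) := fun ω s => P s ω with hg
  have hgmeas : Measurable g := measurable_pi_lambda _ (fun s => hmeas s)
  set B : S → Set (S → ℝ) := fun s0 => {f | ∀ k : S, k ≠ s0 → f k < f s0} with hB
  have hBmeas : ∀ s0, MeasurableSet (B s0) := by
    intro s0
    have : B s0 = ⋂ k : S, ⋂ (_ : k ≠ s0), {f : S → ℝ | f k < f s0} := by
      ext f; simp [hB]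
    rw [this]
    exact MeasurableSet.iInter fun k => MeasurableSet.iInter fun _ =>
      measurableSet_lt (measurable_pi_apply k) (measurable_pi_apply s0)
  have hpre : ∀ (a : ℕ) (ha : a ∈ S), A a = g ⁻¹' (B ⟨a, ha⟩) := by
    intro a ha
    ext ω
    simp only [hA, hB, hg, Set.mem_preimage, Set.mem_setOf_eq]
    constructor
    · intro h k hk; exact h k k.2 (fun he => hk (Subtype.ext he))
    · intro h k hkS hka; exact h ⟨k, hkS⟩ (fun he => hka (congrArg Subtype.val he))
  have hval : ∀ (a : ℕ) (ha : a ∈ S), ℙ (A a) = Measure.pi (fun _ : S => μ) (B ⟨a, ha⟩) := by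
    intro a ha
    rw [hpre a ha, ← Measure.map_apply hgmeas (hBmeas _),
      joint_law P hmeas hindep hident S]
  have hpreB : ∀ (e : (S : Type) ≃ S) (s0 : S),
      (fun f : S → ℝ => f ∘ e) ⁻¹' (B s0) = B (e s0) := by
    intro e s0
    ext f
    simp only [Set.mem_preimage, hB, Set.mem_setOf_eq, Function.comp]
    constructor
    · intro h k hk
      have := h (e.symm k) (fun hh => hk (by rw [← hh, Equiv.apply_symm_apply]))
      simpa using this
    · intro h k hk
      exact h (e k) (e.injective.ne_iff.2 hk)
  have hswap : ∀ s0 s1 : S, Measure.pi (fun _ : S => μ) (B s0)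
      = Measure.pi (fun _ : S => μ) (B s1) := by
    intro s0 s1
    set e : (S : Type) ≃ S := Equiv.swap s0 s1 with he
    have hm : Measurable (fun f : S → ℝ => f ∘ e) :=
      measurable_pi_lambda _ (fun j => measurable_pi_apply (e j))
    calc Measure.pi (fun _ : S => μ) (B s0)
        = (Measure.map (fun f : S → ℝ => f ∘ e) (Measure.pi fun _ : S => μ)) (B s0) := by
          rw [pi_perm_inv]
      _ = Measure.pi (fun _ : S => μ) ((fun f : S → ℝ => f ∘ e) ⁻¹' (B s0)) :=
          Measure.map_apply hm (hBmeas _)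
      _ = Measure.pi (fun _ : S => μ) (B (e s0)) := by rw [hpreB e s0]
      _ = Measure.pi (fun _ : S => μ) (B s1) := by rw [he, Equiv.swap_apply_left]
  have hsym : ∀ a ∈ S, ℙ (A a) = ℙ (A i) := by
    intro a ha
    rw [hval a ha, hval i hi]; exact hswap _ _
  have hdisj : (S : Set ℕ).PairwiseDisjoint A := by
    intro a ha b hb hab
    refine Set.disjoint_left.2 fun ω hwa hwb => ?_
    exact lt_asymm (hwa b hb (Ne.symm hab)) (hwb a ha hab)
  have hScard : S.Nonempty := ⟨i, hi⟩
  have hcover : ℙ ((⋃ a ∈ S, A a)ᶜ) = 0 := by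
    have hsub : (⋃ a ∈ S, A a)ᶜ ⊆ ⋃ a ∈ S, ⋃ b ∈ S, ⋃ (_ : a ≠ b), {ω | P a ω = P b ω} := by
      intro ω hω
      obtain ⟨a, haS, hmax⟩ := S.exists_max_image (fun k => P k ω) hScard
      have hna : ω ∉ A a := fun h => hω (Set.mem_biUnion haS h)
      simp only [hA, Set.mem_setOf_eq, not_forall] at hna
      obtain ⟨b, hbS, hba, hnlt⟩ := hna
      simp only [Set.mem_iUnion]
      exact ⟨b, hbS, a, haS, hba, le_antisymm (hmax b hbS) (not_lt.1 hnlt)⟩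
    refine measure_mono_null hsub ?_
    refine (measure_biUnion_null_iff (Finset.countable_toSet S)).2 fun a _ => ?_
    refine (measure_biUnion_null_iff (Finset.countable_toSet S)).2 fun b _ => ?_
    by_cases hab : a = b
    · simp [hab]
    · exact measure_mono_null (Set.iUnion_subset fun _ => subset_rfl) (hdistinct a b hab)
  have hsum : ∑ a ∈ S, ℙ (A a) = 1 := by
    rw [← measure_biUnion_finset hdisj (fun a _ => hAmeas a)]
    have hmU : MeasurableSet (⋃ a ∈ S, A a) :=
      MeasurableSet.biUnion (Finset.countable_toSet S) (fun a _ => hAmeas a)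
    exact (prob_compl_eq_zero_iff hmU).1 hcover
  have hconst : ∑ a ∈ S, ℙ (A a) = (S.card : ENNReal) * ℙ (A i) := by
    rw [Finset.sum_congr rfl hsym, Finset.sum_const, nsmul_eq_mul]
  have hcard0 : (S.card : ENNReal) ≠ 0 := by
    simpa using Finset.card_ne_zero_of_mem hi
  have hmain : (S.card : ENNReal) * ℙ (A i) = 1 := by rw [← hconst, hsum]
  calc ℙ (A i) = (S.card : ENNReal)⁻¹ * ((S.card : ENNReal) * ℙ (A i)) := by
        rw [← mul_assoc, ENNReal.inv_mul_cancel hcard0 (by simp), one_mul]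
    _ = (S.card : ENNReal)⁻¹ := by rw [hmain, mul_one]

lemma harm_cast (m : ℕ) :
    ((harmonic m : ℚ) : ℝ) = ∑ t ∈ Finset.range m, ((t + 1 : ℕ) : ℝ)⁻¹ := by
  unfold harmonic
  push_cast
  rfl

lemma partA (j : ℕ) (hj1 : 1 ≤ j) :
    ∑ i ∈ Finset.Ioc 0 j, (if i = j then (0:ℝ) else ((max i j + 1 - min i j : ℕ) : ℝ)⁻¹)
      = ((harmonic j : ℚ) : ℝ) - 1 := by
  have h1 : ∑ i ∈ Finset.Ioc 0 j, (if i = j then (0:ℝ) else ((max i j + 1 - min i j : ℕ) : ℝ)⁻¹)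
      = ∑ t ∈ Finset.range j, (if t = 0 then (0:ℝ) else ((t + 1 : ℕ) : ℝ)⁻¹) := by
    refine Finset.sum_nbij' (fun i => j - i) (fun t => j - t) ?_ ?_ ?_ ?_ ?_
    · intro i hi; simp only [Finset.mem_Ioc] at hi; simp only [Finset.mem_range]; omega
    · intro t ht; simp only [Finset.mem_range] at ht; simp only [Finset.mem_Ioc]; omega
    · intro i hi; simp only [Finset.mem_Ioc] at hi; omega
    · intro t ht; simp only [Finset.mem_range] at ht; omega
    · intro i hi
      simp only [Finset.mem_Ioc] at hi
      have hmax : max i j = j := max_eq_right hi.2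
      have hmin : min i j = i := min_eq_left hi.2
      have hc : j + 1 - i = (j - i) + 1 := by omega
      by_cases h : i = j
      · subst h; simp
      · have h0 : ¬ (j - i = 0) := by omega
        rw [hmax, hmin, if_neg h, if_neg h0, hc]
  rw [h1, harm_cast]
  have h2 : ∀ t ∈ Finset.range j, (if t = 0 then (0:ℝ) else ((t + 1 : ℕ) : ℝ)⁻¹)
      = ((t + 1 : ℕ) : ℝ)⁻¹ - (if t = 0 then (1:ℝ) else 0) := by
    intro t _
    by_cases h : t = 0 <;> simp [h]
  rw [Finset.sum_congr rfl h2, Finset.sum_sub_distrib,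
    Finset.sum_ite_eq' (Finset.range j) 0 (fun _ => (1:ℝ)),
    if_pos (Finset.mem_range.mpr hj1)]

lemma partB (n j : ℕ) (hjn : j ≤ n) :
    ∑ i ∈ Finset.Ioc j n, (if i = j then (0:ℝ) else ((max i j + 1 - min i j : ℕ) : ℝ)⁻¹)
      = ((harmonic (n - j + 1) : ℚ) : ℝ) - 1 := by
  have h1 : ∑ i ∈ Finset.Ioc j n, (if i = j then (0:ℝ) else ((max i j + 1 - min i j : ℕ) : ℝ)⁻¹)
      = ∑ t ∈ Finset.range (n - j), ((t + 1 + 1 : ℕ) : ℝ)⁻¹ := by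
    refine Finset.sum_nbij' (fun i => i - j - 1) (fun t => j + t + 1) ?_ ?_ ?_ ?_ ?_
    · intro i hi; simp only [Finset.mem_Ioc] at hi; simp only [Finset.mem_range]; omega
    · intro t ht; simp only [Finset.mem_range] at ht; simp only [Finset.mem_Ioc]; omega
    · intro i hi; simp only [Finset.mem_Ioc] at hi; omega
    · intro t ht; simp only [Finset.mem_range] at ht; omega
    · intro i hi
      simp only [Finset.mem_Ioc] at hi
      have hmax : max i j = i := max_eq_left hi.1.le
      have hmin : min i j = j := min_eq_right hi.1.le
      rw [hmax, hmin, if_neg (by omega : ¬ i = j)]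
      congr 2
      omega
  rw [h1, harm_cast, Finset.sum_range_succ' (fun t => ((t + 1 : ℕ) : ℝ)⁻¹) (n - j)]
  norm_num

/-- With `n` items `x_1 < ... < x_n` (indexed by `1, ..., n`)
assigned i.i.d. priorities from a continuous distribution, and the depth `D_j`
of `x_j` defined as `1` plus the number of indices `i ≠ j` such that `x_i` has
the strictly maximum priority among the consecutive items between `i` and `j`,
we have `E[D_j] = H_j + H_{n−j+1} − 1`. -/
theorem expected_depth_harmonic
    {Ω : Type*} [MeasureSpace Ω] [IsProbabilityMeasure (ℙ : Measure Ω)]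
    (n : ℕ) (P : ℕ → Ω → ℝ)
    (hmeas : ∀ i, Measurable (P i))
    (hindep : iIndepFun P ℙ)
    (hident : ∀ i j, Measure.map (P i) ℙ = Measure.map (P j) ℙ)
    (hdistinct : ∀ i j, i ≠ j → ℙ {ω | P i ω = P j ω} = 0)
    (j : ℕ) (hj1 : 1 ≤ j) (hjn : j ≤ n) :
    ∫ ω, ((1 + ((Finset.Icc 1 n).filter (fun i => i ≠ j ∧
        ∀ k ∈ Finset.Icc (min i j) (max i j), k ≠ i → P k ω < P i ω)).card : ℕ) : ℝ) ∂ℙ =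
      (harmonic j : ℝ) + (harmonic (n - j + 1) : ℝ) - 1 := by
  set A' : ℕ → Set Ω := fun i => {ω | i ≠ j ∧
      ∀ k ∈ Finset.Icc (min i j) (max i j), k ≠ i → P k ω < P i ω} with hA'
  have hA'meas : ∀ i, MeasurableSet (A' i) := by
    intro i
    by_cases h : i = j
    · have : A' i = ∅ := by ext ω; simp [hA', h]
      rw [this]; exact MeasurableSet.empty
    · have : A' i = ⋂ k ∈ Finset.Icc (min i j) (max i j), ⋂ (_ : k ≠ i),
          {ω | P k ω < P i ω} := by
        ext ω; simp [hA', h]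
      rw [this]
      exact MeasurableSet.biInter (Finset.countable_toSet _)
        (fun k _ => MeasurableSet.iInter fun _ => measurableSet_lt (hmeas k) (hmeas i))
  -- pointwise rewrite of the integrand
  have hpt : (fun ω => ((1 + ((Finset.Icc 1 n).filter (fun i => i ≠ j ∧
        ∀ k ∈ Finset.Icc (min i j) (max i j), k ≠ i → P k ω < P i ω)).card : ℕ) : ℝ))
      = fun ω => 1 + ∑ i ∈ Finset.Icc 1 n, Set.indicator (A' i) (fun _ => (1:ℝ)) ω := by
    funext ω
    rw [Finset.card_filter]
    push_cast
    congr 1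
    refine Finset.sum_congr rfl fun i _ => ?_
    rw [Set.indicator_apply]
    by_cases h : ω ∈ A' i
    · rw [if_pos h, if_pos (by simpa [hA'] using h)]
    · rw [if_neg h, if_neg (by simpa [hA'] using h)]
  rw [hpt]
  have hint : ∀ i, Integrable (Set.indicator (A' i) (fun _ => (1:ℝ))) ℙ :=
    fun i => (integrable_const (1:ℝ)).indicator (hA'meas i)
  rw [integral_add (integrable_const 1)
    (integrable_finset_sum _ (fun i _ => hint i)), integral_const,
    integral_finset_sum _ (fun i _ => hint i)]
  have hind : ∀ i, ∫ ω, Set.indicator (A' i) (fun _ => (1:ℝ)) ω ∂ℙ = (ℙ (A' i)).toReal := by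
    intro i
    rw [integral_indicator_const (1:ℝ) (hA'meas i), smul_eq_mul, mul_one]
    exact rfl
  have hprob : ∀ i ∈ Finset.Icc 1 n, (ℙ (A' i)).toReal
      = (if i = j then (0:ℝ) else ((max i j + 1 - min i j : ℕ) : ℝ)⁻¹) := by
    intro i _
    by_cases h : i = j
    · have : A' i = ∅ := by ext ω; simp [hA', h]
      rw [this, if_pos h]; simp
    · rw [if_neg h]
      have hset : A' i = {ω | ∀ k ∈ Finset.Icc (min i j) (max i j), k ≠ i → P k ω < P i ω} := by
        ext ω; simp [hA', h]
      have hiS : i ∈ Finset.Icc (min i j) (max i j) :=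
        Finset.mem_Icc.2 ⟨min_le_left i j, le_max_left i j⟩
      rw [hset, strict_max_prob P hmeas hindep hident hdistinct _ i hiS,
        Nat.card_Icc, ENNReal.toReal_inv, ENNReal.toReal_natCast]
  rw [Finset.sum_congr rfl (fun i hi => (hind i).trans (hprob i hi))]
  have hIcc : Finset.Icc 1 n = Finset.Ioc 0 n := by
    ext i; simp [Finset.mem_Icc, Finset.mem_Ioc]; omega
  rw [hIcc, ← Finset.sum_Ioc_consecutive _ (Nat.zero_le j) hjn, partA j hj1, partB n j hjn]
  simp only [measure_univ, probReal_univ, ENNReal.toReal_one, smul_eq_mul, one_mul, mul_one]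
  ring
end
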